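/- Two unbiased qubit observables A^a and A^b, defined by A^a(±) = (1/2)(I ± a·σ) and A^b(±) = (1/2)(I ± b·σ) for vectors a,b ∈ ℝ³ with |a|,|b| ≤ 1, are compatible (admit a joint POVM on four outcomes with the correct marginals) if and only if |a+b| + |a−b| ≤ 2. -/

import Mathlib

open Matrix ComplexOrder

noncomputable section

abbrev Mat2 := Matrix (Fin 2) (Fin 2) ℂ

def sigma1 : Mat2 := !![0, 1; 1, 0]
def sigma2 : Mat2 := !![0, -Complex.I; Complex.I, 0]
def sigma3 : Mat2 := !![1, 0; 0, -1]

/-- `a · σ` for a Bloch vector `a ∈ ℝ³`. -/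
def pauliDot (a : EuclideanSpace ℝ (Fin 3)) : Mat2 :=
  (a 0 : ℂ) • sigma1 + (a 1 : ℂ) • sigma2 + (a 2 : ℂ) • sigma3

/-- The unbiased qubit observable `A^a(±) = (1/2)(I ± a·σ)`, `true` = `+`. -/
def qObs (a : EuclideanSpace ℝ (Fin 3)) (s : Bool) : Mat2 :=
  ((1 : ℂ) / 2) • ((1 : Mat2) + (if s then (1 : ℂ) else -1) • pauliDot a)

def IsPOVM {ι : Type*} [Fintype ι] {n : Type*} [Fintype n] [DecidableEq n]
    (G : ι → Matrix n n ℂ) : Prop :=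
  (∀ i, (G i).PosSemidef) ∧ ∑ i, G i = 1

/-! ### Auxiliary machinery -/

/-- real part of trace -/
def trR (M : Mat2) : ℝ := (M 0 0).re + (M 1 1).re

/-- Bloch vector of a (Hermitian) matrix. -/
def bloch (M : Mat2) : EuclideanSpace ℝ (Fin 3) :=
  (WithLp.equiv 2 _).symm ![(M 0 1).re + (M 1 0).re, (M 1 0).im - (M 0 1).im,
    (M 0 0).re - (M 1 1).re]

lemma bloch_apply (M : Mat2) (i : Fin 3) :
    bloch M = (WithLp.toLp 2 ![(M 0 1).re + (M 1 0).re, (M 1 0).im - (M 0 1).im,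
    (M 0 0).re - (M 1 1).re] : EuclideanSpace ℝ (Fin 3)) := rfl

lemma trR_add (M N : Mat2) : trR (M + N) = trR M + trR N := by
  simp [trR, Matrix.add_apply]; ring

lemma bloch_add (M N : Mat2) : bloch (M + N) = bloch M + bloch N := by
  ext i
  fin_cases i <;>
    simp [bloch, Matrix.add_apply, WithLp.equiv_symm_apply, PiLp.toLp_apply, PiLp.add_apply] <;> ring

lemma norm_euclidean (v : EuclideanSpace ℝ (Fin 3)) :
    ‖v‖ = Real.sqrt ((v 0)^2 + (v 1)^2 + (v 2)^2) := by
  rw [EuclideanSpace.norm_eq]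
  congr 1
  rw [Fin.sum_univ_three]
  simp [Real.norm_eq_abs, sq_abs]

lemma norm_sq_euclidean (v : EuclideanSpace ℝ (Fin 3)) :
    ‖v‖^2 = (v 0)^2 + (v 1)^2 + (v 2)^2 := by
  rw [norm_euclidean, Real.sq_sqrt] <;> positivity

/-- The key scalar inequality (Cauchy–Schwarz). -/
lemma key_ineq (c s v0 v1 v2 w0 w1 w2 : ℝ) (hc : 0 ≤ c) (hs : 0 ≤ s)
    (hv : v0^2 + v1^2 + v2^2 ≤ c^2) (hw : w0^2 + w1^2 + w2^2 ≤ s^2) :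
    0 ≤ c * s + (v0 * w0 + v1 * w1 + v2 * w2) := by
  nlinarith [sq_nonneg (v0*w1 - v1*w0), sq_nonneg (v0*w2 - v2*w0), sq_nonneg (v1*w2 - v2*w1),
    sq_nonneg (c*s + (v0*w0 + v1*w1 + v2*w2)), mul_nonneg hc hs,
    sq_nonneg (v0*w0 + v1*w1 + v2*w2)]

/-- A 2×2 matrix of the form `(1/4)(c·I + v·σ)` with `‖v‖ ≤ c` is PSD. -/
lemma genM_posSemidef (c : ℝ) (v : EuclideanSpace ℝ (Fin 3)) (h : ‖v‖ ≤ c) :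
    (((1 : ℂ)/4) • ((c : ℂ) • (1 : Mat2) + pauliDot v)).PosSemidef := by
  have hc : 0 ≤ c := le_trans (norm_nonneg v) h
  have hv : (v 0)^2 + (v 1)^2 + (v 2)^2 ≤ c^2 := by
    rw [← norm_sq_euclidean]
    exact pow_le_pow_left₀ (norm_nonneg v) h 2
  rw [Matrix.posSemidef_iff_dotProduct_mulVec]
  constructor
  · ext i j
    fin_cases i <;> fin_cases j <;>
      simp [pauliDot, sigma1, sigma2, sigma3, Matrix.conjTranspose_apply, Matrix.add_apply,
        Matrix.smul_apply, Matrix.one_apply, Complex.ext_iff] <;> ring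
  · intro x
    rw [Complex.nonneg_iff]
    have expand : star x ⬝ᵥ ((((1 : ℂ)/4) • ((c : ℂ) • (1 : Mat2) + pauliDot v)) *ᵥ x) =
        ((1 : ℂ)/4) * ((starRingEnd ℂ) (x 0) * (((c : ℂ) + (v 2 : ℝ)) * x 0 +
          ((v 0 : ℝ) - (v 1 : ℝ) * Complex.I) * x 1) +
        (starRingEnd ℂ) (x 1) * (((v 0 : ℝ) + (v 1 : ℝ) * Complex.I) * x 0 +
          ((c : ℂ) - (v 2 : ℝ)) * x 1)) := by
      simp [dotProduct, Matrix.mulVec, Fin.sum_univ_two, pauliDot, sigma1, sigma2, sigma3,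
        Matrix.add_apply, Matrix.smul_apply, Matrix.one_apply]
      ring
    rw [expand]
    constructor
    · have hkey := key_ineq c ((x 0).re^2+(x 0).im^2+(x 1).re^2+(x 1).im^2) (v 0) (v 1) (v 2)
        (2*((x 0).re*(x 1).re+(x 0).im*(x 1).im)) (2*((x 0).re*(x 1).im - (x 0).im*(x 1).re))
        ((x 0).re^2+(x 0).im^2-((x 1).re^2+(x 1).im^2)) hc (by positivity) hv
        (by nlinarith [sq_nonneg ((x 0).re*(x 1).re+(x 0).im*(x 1).im),
              sq_nonneg ((x 0).re*(x 1).im - (x 0).im*(x 1).re)])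
      simp [Complex.add_re, Complex.mul_re, Complex.mul_im, Complex.add_im, Complex.sub_re,
        Complex.sub_im, Complex.ofReal_re, Complex.ofReal_im, Complex.I_re, Complex.I_im]
      nlinarith [hkey]
    · simp [Complex.add_re, Complex.mul_re, Complex.mul_im, Complex.add_im, Complex.sub_re,
        Complex.sub_im, Complex.ofReal_re, Complex.ofReal_im, Complex.I_re, Complex.I_im]
      ring


/-- For a PSD 2×2 matrix, the Bloch vector norm is at most the trace. -/
lemma norm_bloch_le (M : Mat2) (h : M.PosSemidef) : ‖bloch M‖ ≤ trR M := by
  have hB : M 1 0 = (starRingEnd ℂ) (M 0 1) := by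
    have := h.1.apply 1 0
    simpa using this.symm
  have h00 := h.dotProduct_mulVec_nonneg ![1, 0]
  rw [Complex.nonneg_iff] at h00
  simp [dotProduct, Matrix.mulVec, Fin.sum_univ_two] at h00
  obtain ⟨hp, hpi⟩ := h00
  have h11 := h.dotProduct_mulVec_nonneg ![0, 1]
  rw [Complex.nonneg_iff] at h11
  simp [dotProduct, Matrix.mulVec, Fin.sum_univ_two] at h11
  obtain ⟨hq, hqi⟩ := h11
  set p := (M 0 0).re with hpdef
  set q := (M 1 1).re with hqdef
  set B := M 0 1 with hBdef
  -- three more specializations of the quadratic form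
  have h1 := h.dotProduct_mulVec_nonneg ![(q : ℂ), -(starRingEnd ℂ) B]
  rw [Complex.nonneg_iff] at h1
  have h1' : 0 ≤ q * (p * q - Complex.normSq B) := by
    obtain ⟨h1, -⟩ := h1
    simp [dotProduct, Matrix.mulVec, Fin.sum_univ_two, hB, Complex.normSq_apply,
      Complex.add_re, Complex.mul_re, Complex.mul_im, ← hpi, ← hqi] at h1 ⊢
    nlinarith [h1]
  have h2 := h.dotProduct_mulVec_nonneg ![-B, (p : ℂ)]
  rw [Complex.nonneg_iff] at h2
  have h2' : 0 ≤ p * (p * q - Complex.normSq B) := by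
    obtain ⟨h2, -⟩ := h2
    simp [dotProduct, Matrix.mulVec, Fin.sum_univ_two, hB, Complex.normSq_apply,
      Complex.add_re, Complex.mul_re, Complex.mul_im, ← hpi, ← hqi] at h2 ⊢
    nlinarith [h2]
  have h3 := h.dotProduct_mulVec_nonneg ![B, -1]
  rw [Complex.nonneg_iff] at h3
  have h3' : 0 ≤ p * Complex.normSq B + q - 2 * Complex.normSq B := by
    obtain ⟨h3, -⟩ := h3
    simp [dotProduct, Matrix.mulVec, Fin.sum_univ_two, hB, Complex.normSq_apply,
      Complex.add_re, Complex.mul_re, Complex.mul_im, ← hpi, ← hqi] at h3 ⊢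
    nlinarith [h3]
  have hdet : Complex.normSq B ≤ p * q := by
    rcases eq_or_lt_of_le (by linarith : (0:ℝ) ≤ p + q) with hz | hz
    · have hp0 : p = 0 := by linarith
      have hq0 : q = 0 := by linarith
      have : Complex.normSq B = 0 := by
        have := Complex.normSq_nonneg B
        nlinarith [h3']
      rw [this, hp0, hq0]; simp
    · nlinarith [h1', h2']
  -- now compute the norm
  have e0 : bloch M 0 = (M 0 1).re + (M 1 0).re := rfl
  have e1 : bloch M 1 = (M 1 0).im - (M 0 1).im := rfl
  have e2 : bloch M 2 = (M 0 0).re - (M 1 1).re := rfl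
  rw [norm_euclidean, e0, e1, e2]
  have hre : (M 1 0).re = B.re := by rw [hB]; simp
  have him : (M 1 0).im = -B.im := by rw [hB]; simp
  rw [hre, him]
  have : ((B.re + B.re)^2 + (-B.im - B.im)^2 + (p - q)^2 : ℝ) ≤ (p + q)^2 := by
    have hnsq : Complex.normSq B = B.re^2 + B.im^2 := by
      simp [Complex.normSq_apply]; ring
    nlinarith [hdet]
  calc Real.sqrt ((B.re + B.re)^2 + (-B.im - B.im)^2 + (p - q)^2)
      ≤ Real.sqrt ((p + q)^2) := Real.sqrt_le_sqrt this
    _ = p + q := Real.sqrt_sq (by linarith)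
    _ = trR M := rfl

lemma trR_qObs (a : EuclideanSpace ℝ (Fin 3)) (s : Bool) : trR (qObs a s) = 1 := by
  cases s <;>
    simp [trR, qObs, pauliDot, sigma1, sigma2, sigma3, Matrix.add_apply, Matrix.smul_apply,
      Matrix.one_apply] <;> ring

lemma bloch_qObs_true (a : EuclideanSpace ℝ (Fin 3)) : bloch (qObs a true) = a := by
  ext i
  fin_cases i <;>
    simp [bloch, qObs, pauliDot, sigma1, sigma2, sigma3, Matrix.add_apply, Matrix.smul_apply,
      Matrix.one_apply, WithLp.equiv_symm_apply, PiLp.toLp_apply] <;> ring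

lemma bloch_qObs_false (a : EuclideanSpace ℝ (Fin 3)) : bloch (qObs a false) = -a := by
  ext i
  fin_cases i <;>
    simp [bloch, qObs, pauliDot, sigma1, sigma2, sigma3, Matrix.add_apply, Matrix.smul_apply,
      Matrix.one_apply, WithLp.equiv_symm_apply, PiLp.toLp_apply] <;> ring

set_option maxHeartbeats 1000000 in
theorem qubit_unbiased_compatible_iff (a b : EuclideanSpace ℝ (Fin 3))
    (ha : ‖a‖ ≤ 1) (hb : ‖b‖ ≤ 1) :
    (∃ G : Bool × Bool → Mat2, IsPOVM G ∧
      (∀ x, G (x, true) + G (x, false) = qObs a x) ∧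
      (∀ y, G (true, y) + G (false, y) = qObs b y)) ↔
    ‖a + b‖ + ‖a - b‖ ≤ 2 := by
  constructor
  · rintro ⟨G, ⟨hpsd, hsum⟩, hma, hmb⟩
    have key : ∀ xy, ‖bloch (G xy)‖ ≤ trR (G xy) := fun xy => norm_bloch_le _ (hpsd xy)
    have e1 : bloch (G (true, true)) + bloch (G (true, false)) = a := by
      rw [← bloch_add, hma true, bloch_qObs_true]
    have e3 : bloch (G (true, true)) + bloch (G (false, true)) = b := by
      rw [← bloch_add, hmb true, bloch_qObs_true]
    have e4 : bloch (G (true, false)) + bloch (G (false, false)) = -b := by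
      rw [← bloch_add, hmb false, bloch_qObs_false]
    have s1 : trR (G (true, true)) + trR (G (true, false)) = 1 := by
      rw [← trR_add, hma true, trR_qObs]
    have s2 : trR (G (false, true)) + trR (G (false, false)) = 1 := by
      rw [← trR_add, hma false, trR_qObs]
    have hab : bloch (G (true, true)) - bloch (G (false, false)) = a + b := by
      have h0 : bloch (G (true, true)) - bloch (G (false, false)) =
          (bloch (G (true, true)) + bloch (G (true, false))) -
            (bloch (G (true, false)) + bloch (G (false, false))) := by abel
      rw [h0, e1, e4, sub_neg_eq_add]
    have hamb : bloch (G (true, false)) - bloch (G (false, true)) = a - b := by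
      have h0 : bloch (G (true, false)) - bloch (G (false, true)) =
          (bloch (G (true, true)) + bloch (G (true, false))) -
            (bloch (G (true, true)) + bloch (G (false, true))) := by abel
      rw [h0, e1, e3]
    have n1 : ‖a + b‖ ≤ trR (G (true, true)) + trR (G (false, false)) := by
      rw [← hab]
      calc ‖bloch (G (true, true)) - bloch (G (false, false))‖
          ≤ ‖bloch (G (true, true))‖ + ‖bloch (G (false, false))‖ := norm_sub_le _ _
        _ ≤ _ := add_le_add (key _) (key _)
    have n2 : ‖a - b‖ ≤ trR (G (true, false)) + trR (G (false, true)) := by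
      rw [← hamb]
      calc ‖bloch (G (true, false)) - bloch (G (false, true))‖
          ≤ ‖bloch (G (true, false))‖ + ‖bloch (G (false, true))‖ := norm_sub_le _ _
        _ ≤ _ := add_le_add (key _) (key _)
    linarith
  · intro h
    set α : ℝ := ‖a + b‖ - 1 with hα
    set e : Bool → ℝ := fun s => if s then 1 else -1 with he
    refine ⟨fun xy => ((1 : ℂ)/4) •
      ((((1 + e xy.1 * e xy.2 * α : ℝ)) : ℂ) • (1 : Mat2) +
        pauliDot (e xy.1 • a + e xy.2 • b)), ⟨?_, ?_⟩, ?_, ?_⟩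
    · rintro ⟨x, y⟩
      apply genM_posSemidef
      cases x <;> cases y <;> simp [he, one_smul, neg_one_smul]
      · rw [show (-a + -b : EuclideanSpace ℝ (Fin 3)) = -(a + b) from by module, norm_neg]
        simp only [hα]; linarith
      · rw [show (-a + b : EuclideanSpace ℝ (Fin 3)) = -(a - b) from by module, norm_neg]
        simp only [hα]; linarith
      · rw [show (a + -b : EuclideanSpace ℝ (Fin 3)) = a - b from by module]
        simp only [hα]; linarith
      · simp only [hα]; linarith
    · -- sum = 1
      rw [Fintype.sum_prod_type]
      simp only [Fintype.sum_bool]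
      ext i j
      fin_cases i <;> fin_cases j <;>
        simp [he, pauliDot, sigma1, sigma2, sigma3, Matrix.add_apply, Matrix.smul_apply,
          Matrix.one_apply, PiLp.add_apply, PiLp.smul_apply, smul_eq_mul] <;>
        push_cast <;> ring
    · intro x
      ext i j
      cases x <;> fin_cases i <;> fin_cases j <;>
        simp [he, qObs, pauliDot, sigma1, sigma2, sigma3, Matrix.add_apply, Matrix.smul_apply,
          Matrix.one_apply, PiLp.add_apply, PiLp.smul_apply, smul_eq_mul] <;>
        push_cast <;> ring
    · intro y
      ext i j
      cases y <;> fin_cases i <;> fin_cases j <;>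
        simp [he, qObs, pauliDot, sigma1, sigma2, sigma3, Matrix.add_apply, Matrix.smul_apply,
          Matrix.one_apply, PiLp.add_apply, PiLp.smul_apply, smul_eq_mul] <;>
        push_cast <;> ring
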